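/- Let α, β ∈ ℝ satisfy β > −1 and 2α + β < −1. Then the function u ↦ (1+u²)^α u^β is integrable on (0,∞) and ∫_0^∞ (1+u²)^α u^β du = Γ(−α − β/2 − 1/2) · Γ((β+1)/2) / (2 Γ(−α)). -/

import Mathlib

open MeasureTheory

lemma beta_ofReal (a b x : ℝ) (hx0 : 0 ≤ x) (hx1 : x ≤ 1) :
    (x : ℂ) ^ ((a : ℂ) - 1) * (1 - (x : ℂ)) ^ ((b : ℂ) - 1)
      = ((x ^ (a - 1) * (1 - x) ^ (b - 1) : ℝ) : ℂ) := by
  rw [show ((a : ℂ) - 1) = ((a - 1 : ℝ) : ℂ) by push_cast; ring,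
    show ((b : ℂ) - 1) = ((b - 1 : ℝ) : ℂ) by push_cast; ring,
    show (1 - (x : ℂ)) = (((1 - x : ℝ)) : ℂ) by push_cast; ring,
    ← Complex.ofReal_cpow hx0, ← Complex.ofReal_cpow (by linarith : (0:ℝ) ≤ 1 - x),
    ← Complex.ofReal_mul]

/-- Real Beta integral: integrability. -/
lemma real_beta_integrable (a b : ℝ) (ha : 0 < a) (hb : 0 < b) :
    IntegrableOn (fun x : ℝ => x ^ (a - 1) * (1 - x) ^ (b - 1)) (Set.Ioo 0 1) := by
  have hC : IntegrableOn (fun x : ℝ =>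
      (x : ℂ) ^ ((a : ℂ) - 1) * (1 - (x : ℂ)) ^ ((b : ℂ) - 1)) (Set.Ioo 0 1) := by
    have := (Complex.betaIntegral_convergent (u := a) (v := b)
      (by simpa using ha) (by simpa using hb))
    rw [intervalIntegrable_iff_integrableOn_Ioc_of_le zero_le_one] at this
    exact this.mono_set Set.Ioo_subset_Ioc_self
  refine IntegrableOn.congr_fun hC.re ?_ measurableSet_Ioo
  intro x hx
  simp [beta_ofReal a b x hx.1.le hx.2.le]

/-- Real Beta integral: value. -/
lemma real_beta_value (a b : ℝ) (ha : 0 < a) (hb : 0 < b) :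
    ∫ x in Set.Ioo (0:ℝ) 1, x ^ (a - 1) * (1 - x) ^ (b - 1)
      = Real.Gamma a * Real.Gamma b / Real.Gamma (a + b) := by
  have key : Complex.Gamma a * Complex.Gamma b
      = Complex.Gamma (a + b) * Complex.betaIntegral a b := by
    have := Complex.Gamma_mul_Gamma_eq_betaIntegral (s := a) (t := b)
      (by simpa using ha) (by simpa using hb)
    simpa using this
  have hbeta : Complex.betaIntegral a b
      = ((∫ x in Set.Ioo (0:ℝ) 1, x ^ (a - 1) * (1 - x) ^ (b - 1) : ℝ) : ℂ) := by
    rw [Complex.betaIntegral]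
    rw [intervalIntegral.integral_of_le zero_le_one,
      MeasureTheory.integral_Ioc_eq_integral_Ioo]
    rw [setIntegral_congr_fun measurableSet_Ioo
      (fun x hx => beta_ofReal a b x hx.1.le hx.2.le)]
    exact integral_ofReal
  rw [hbeta] at key
  have hab : Real.Gamma (a + b) ≠ 0 := (Real.Gamma_pos_of_pos (by linarith)).ne'
  have key2 : Real.Gamma a * Real.Gamma b
      = Real.Gamma (a + b) * ∫ x in Set.Ioo (0:ℝ) 1, x ^ (a - 1) * (1 - x) ^ (b - 1) := by
    rw [Complex.Gamma_ofReal, Complex.Gamma_ofReal,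
      show ((a : ℂ) + b) = ((a + b : ℝ) : ℂ) by push_cast; ring, Complex.Gamma_ofReal,
      ← Complex.ofReal_mul, ← Complex.ofReal_mul] at key
    exact_mod_cast key
  rw [key2]
  field_simp

theorem stmt_14 (α β : ℝ) (hβ : -1 < β) (hαβ : 2 * α + β < -1) :
    IntegrableOn (fun u : ℝ => (1 + u ^ 2) ^ α * u ^ β) (Set.Ioi 0) ∧
    ∫ u in Set.Ioi (0 : ℝ), (1 + u ^ 2) ^ α * u ^ β
      = Real.Gamma (-α - β / 2 - 1 / 2) * Real.Gamma ((β + 1) / 2)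
        / (2 * Real.Gamma (-α)) := by
  set a : ℝ := (β + 1) / 2 with ha_def
  set b : ℝ := -α - (β + 1) / 2 with hb_def
  have ha : 0 < a := by simp only [ha_def]; linarith
  have hb : 0 < b := by simp only [hb_def]; linarith
  -- substitution f u = u^2 / (1 + u^2)
  set f : ℝ → ℝ := fun u => u ^ 2 / (1 + u ^ 2) with hf_def
  set f' : ℝ → ℝ := fun u => 2 * u / (1 + u ^ 2) ^ 2 with hf'_def
  have hderiv : ∀ u ∈ Set.Ioi (0:ℝ), HasDerivWithinAt f (f' u) (Set.Ioi 0) u := by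
    intro u hu
    have h1 : (0:ℝ) < 1 + u ^ 2 := by positivity
    have hnum : HasDerivAt (fun u : ℝ => u ^ 2) (2 * u) u := by
      simpa using hasDerivAt_pow 2 u
    have hden : HasDerivAt (fun u : ℝ => 1 + u ^ 2) (2 * u) u := by
      simpa using (hasDerivAt_pow 2 u).const_add 1
    have := hnum.div hden h1.ne'
    refine HasDerivAt.hasDerivWithinAt ?_
    convert this using 1
    · rfl
    · rfl
    simp only [hf'_def]
    congr 1
    ring
  have hinj : Set.InjOn f (Set.Ioi 0) := by
    intro u hu v hv h
    simp only [hf_def] at h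
    have hu0 : (0:ℝ) < u := hu
    have hv0 : (0:ℝ) < v := hv
    have h1 : (0:ℝ) < 1 + u ^ 2 := by positivity
    have h2 : (0:ℝ) < 1 + v ^ 2 := by positivity
    rw [div_eq_div_iff h1.ne' h2.ne'] at h
    nlinarith
  have himg : f '' Set.Ioi 0 = Set.Ioo 0 1 := by
    ext x
    constructor
    · rintro ⟨u, hu, rfl⟩
      have hu0 : (0:ℝ) < u := hu
      have h1 : (0:ℝ) < 1 + u ^ 2 := by positivity
      constructor
      · positivity
      · rw [div_lt_one h1]; nlinarith
    · rintro ⟨hx0, hx1⟩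
      refine ⟨Real.sqrt (x / (1 - x)), ?_, ?_⟩
      · have : (0:ℝ) < x / (1 - x) := div_pos hx0 (by linarith)
        exact Real.sqrt_pos.mpr this
      · have hxx : (0:ℝ) ≤ x / (1 - x) := le_of_lt (div_pos hx0 (by linarith))
        have h1x : (1:ℝ) - x ≠ 0 := by linarith
        simp only [hf_def, Real.sq_sqrt hxx]
        field_simp
        ring
  -- pointwise identity on Ioi 0
  have hpt : ∀ u ∈ Set.Ioi (0:ℝ),
      |f' u| • ((f u) ^ (a - 1) * (1 - f u) ^ (b - 1))
        = 2 * ((1 + u ^ 2) ^ α * u ^ β) := by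
    intro u hu
    have hu0 : (0:ℝ) < u := hu
    set c : ℝ := 1 + u ^ 2 with hc_def
    have hc : (0:ℝ) < c := by positivity
    have habs : |f' u| = 2 * u / c ^ 2 := abs_of_pos (by positivity)
    have hsub : 1 - f u = 1 / c := by
      simp only [hf_def, hc_def]; field_simp; ring
    have hfu : f u = u ^ 2 / c := rfl
    have A : (u ^ 2 / c) ^ (a - 1) = u ^ (2 * a - 2) / c ^ (a - 1) := by
      rw [Real.div_rpow (sq_nonneg u) hc.le]
      congr 1
      rw [← Real.rpow_natCast u 2, ← Real.rpow_mul hu0.le]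
      congr 1
      push_cast
      ring
    have B : (1 / c) ^ (b - 1) = (c ^ (b - 1))⁻¹ := by
      rw [one_div, Real.inv_rpow hc.le]
    have C : (c : ℝ) ^ (2 : ℕ) = c ^ ((2:ℕ) : ℝ) := (Real.rpow_natCast c 2).symm
    have D : u * u ^ (2 * a - 2) = u ^ β := by
      nth_rewrite 1 [← Real.rpow_one u]
      rw [← Real.rpow_add hu0]
      congr 1
      simp only [ha_def]; ring
    have E : c ^ ((2:ℕ) : ℝ) * c ^ (a - 1) * c ^ (b - 1) = c ^ (-α) := by
      rw [← Real.rpow_add hc, ← Real.rpow_add hc]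
      congr 1
      simp only [ha_def, hb_def]
      push_cast
      ring
    have hcα : c ^ (-α) = (c ^ α)⁻¹ := Real.rpow_neg hc.le α
    have n1 : c ^ (a - 1) ≠ 0 := (Real.rpow_pos_of_pos hc _).ne'
    have n2 : c ^ (b - 1) ≠ 0 := (Real.rpow_pos_of_pos hc _).ne'
    have n3 : c ^ ((2:ℕ) : ℝ) ≠ 0 := (Real.rpow_pos_of_pos hc _).ne'
    rw [smul_eq_mul, habs, hsub, hfu, A, B, C]
    have step : 2 * u / c ^ ((2:ℕ) : ℝ) * (u ^ (2 * a - 2) / c ^ (a - 1) * (c ^ (b - 1))⁻¹)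
        = 2 * (u * u ^ (2 * a - 2)) / (c ^ ((2:ℕ) : ℝ) * c ^ (a - 1) * c ^ (b - 1)) := by
      field_simp
    rw [step, D, E, hcα, div_eq_mul_inv, inv_inv]
    ring
  have hInt : IntegrableOn (fun u : ℝ => (1 + u ^ 2) ^ α * u ^ β) (Set.Ioi 0) := by
    have h1 : IntegrableOn (fun x : ℝ => x ^ (a - 1) * (1 - x) ^ (b - 1)) (f '' Set.Ioi 0) := by
      rw [himg]; exact real_beta_integrable a b ha hb
    rw [integrableOn_image_iff_integrableOn_abs_deriv_smul measurableSet_Ioi hderiv hinj] at h1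
    have h2 : IntegrableOn (fun u : ℝ => 2 * ((1 + u ^ 2) ^ α * u ^ β)) (Set.Ioi 0) :=
      h1.congr_fun hpt measurableSet_Ioi
    exact IntegrableOn.congr_fun (h2.const_mul (1/2 : ℝ))
      (fun x _ => by ring) measurableSet_Ioi
  refine ⟨hInt, ?_⟩
  have hsubst := integral_image_eq_integral_abs_deriv_smul measurableSet_Ioi hderiv hinj
    (fun x : ℝ => x ^ (a - 1) * (1 - x) ^ (b - 1))
  rw [himg, real_beta_value a b ha hb] at hsubst
  rw [setIntegral_congr_fun measurableSet_Ioi hpt] at hsubst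
  rw [integral_const_mul] at hsubst
  have hG1 : -α - β / 2 - 1 / 2 = b := by simp only [hb_def]; ring
  have hG3 : -α = a + b := by simp only [ha_def, hb_def]; ring
  rw [hG1, hG3]
  have : ∫ u in Set.Ioi (0:ℝ), (1 + u ^ 2) ^ α * u ^ β
      = Real.Gamma a * Real.Gamma b / Real.Gamma (a + b) / 2 := by
    linarith [hsubst]
  rw [this]
  ring
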